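/- Fix $p\in(0,1)$ and for $a\in[0,1]$ let $\phi(a)$ be the unique $s\in[a,1]$ with $p(1-p)(2-s)^2(s-a)=a(1-s)$. Then $\phi$ is increasing on $[0,1]$, differentiable on $(0,1)$, and invertible with increasing inverse; moreover $\phi^{-1}(s)=s$ for $s\in\{0,1\}$ and $0<\phi^{-1}(s)<s<1$ for $s\in(0,1)$. -/

import Mathlib

open Set

def paperPhi (p a s : ℝ) : ℝ := p * (1 - p) * (2 - s) ^ 2 * (s - a) - a * (1 - s)

noncomputable def paperPsi (p s : ℝ) : ℝ :=
  p * (1 - p) * (2 - s) ^ 2 * s / (p * (1 - p) * (2 - s) ^ 2 + (1 - s))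

lemma den_pos {p s : ℝ} (hp : p ∈ Set.Ioo (0 : ℝ) 1) (hs : s ∈ Set.Icc (0 : ℝ) 1) :
    0 < p * (1 - p) * (2 - s) ^ 2 + (1 - s) := by
  obtain ⟨hp0, hp1⟩ := hp; obtain ⟨hs0, hs1⟩ := hs
  have hc : 0 < p * (1 - p) := mul_pos hp0 (by linarith)
  have h1 : (1:ℝ) ≤ (2 - s) ^ 2 := by nlinarith
  nlinarith [mul_le_mul_of_nonneg_left h1 hc.le]

lemma psi_eq {p a s : ℝ} (hp : p ∈ Set.Ioo (0 : ℝ) 1) (hs : s ∈ Set.Icc (0 : ℝ) 1)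
    (h : paperPhi p a s = 0) : paperPsi p s = a := by
  have hD := den_pos hp hs
  unfold paperPhi at h
  unfold paperPsi
  rw [div_eq_iff hD.ne']
  linear_combination h

lemma psi_strictMonoOn {p : ℝ} (hp : p ∈ Set.Ioo (0 : ℝ) 1) :
    StrictMonoOn (paperPsi p) (Set.Icc (0 : ℝ) 1) := by
  intro s hs t ht hst
  have hDs := den_pos hp hs
  have hDt := den_pos hp ht
  unfold paperPsi
  rw [div_lt_div_iff₀ hDs hDt]
  obtain ⟨hp0, hp1⟩ := hp
  obtain ⟨hs0, hs1⟩ := hs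
  obtain ⟨ht0, ht1⟩ := ht
  have hc : 0 < p * (1 - p) := mul_pos hp0 (by linarith)
  have key : t * (2 - t) ^ 2 * (1 - s) - s * (2 - s) ^ 2 * (1 - t) ≥ 0 := by
    nlinarith [mul_nonneg (mul_nonneg hs0 (by linarith : (0:ℝ) ≤ 1 - s)) (by linarith : (0:ℝ) ≤ t - s), sq_nonneg (s - t), sq_nonneg (s + t - 2), mul_nonneg hs0 ht0, mul_nonneg (mul_nonneg hs0 ht0) (by linarith : (0:ℝ) ≤ t - s)]
  have h2s : (0:ℝ) < 2 - s := by linarith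
  have h2t : (0:ℝ) < 2 - t := by linarith
  have key2 : 0 < p * (1 - p) * ((2 - s) ^ 2 * (2 - t) ^ 2 * (t - s)) :=
    mul_pos hc (mul_pos (mul_pos (pow_pos h2s 2) (pow_pos h2t 2)) (by linarith))
  nlinarith [mul_nonneg hc.le key]

lemma psi_le {p s : ℝ} (hp : p ∈ Set.Ioo (0 : ℝ) 1) (hs : s ∈ Set.Icc (0 : ℝ) 1) :
    paperPsi p s ≤ s := by
  have hD := den_pos hp hs
  obtain ⟨hp0, hp1⟩ := hp
  obtain ⟨hs0, hs1⟩ := hs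
  unfold paperPsi
  rw [div_le_iff₀ hD]
  nlinarith [mul_nonneg hs0 (by linarith : (0:ℝ) ≤ 1 - s)]

lemma psi_nonneg {p s : ℝ} (hp : p ∈ Set.Ioo (0 : ℝ) 1) (hs : s ∈ Set.Icc (0 : ℝ) 1) :
    0 ≤ paperPsi p s := by
  have hD := den_pos hp hs
  obtain ⟨hp0, hp1⟩ := hp
  obtain ⟨hs0, hs1⟩ := hs
  apply div_nonneg _ hD.le
  have : (0:ℝ) ≤ 1 - p := by linarith
  positivity

theorem stmt_15 (p : ℝ) (hp : p ∈ Set.Ioo (0 : ℝ) 1) (φ : ℝ → ℝ)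
    (hφ : ∀ a ∈ Set.Icc (0 : ℝ) 1, φ a ∈ Set.Icc a 1 ∧ paperPhi p a (φ a) = 0) :
    StrictMonoOn φ (Set.Icc (0 : ℝ) 1) ∧
    DifferentiableOn ℝ φ (Set.Ioo (0 : ℝ) 1) ∧
    ∃ ψ : ℝ → ℝ,
      (∀ a ∈ Set.Icc (0 : ℝ) 1, ψ (φ a) = a) ∧
      (∀ s ∈ Set.Icc (0 : ℝ) 1, φ (ψ s) = s ∧ ψ s ∈ Set.Icc (0 : ℝ) 1) ∧
      StrictMonoOn ψ (Set.Icc (0 : ℝ) 1) ∧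
      ψ 0 = 0 ∧ ψ 1 = 1 ∧
      ∀ s ∈ Set.Ioo (0 : ℝ) 1, 0 < ψ s ∧ ψ s < s := by
  obtain ⟨hp0, hp1⟩ := hp
  have hp' : p ∈ Set.Ioo (0:ℝ) 1 := ⟨hp0, hp1⟩
  have hc : 0 < p * (1 - p) := mul_pos hp0 (by linarith)
  -- φ maps into [0,1]
  have hmem : ∀ a ∈ Set.Icc (0:ℝ) 1, φ a ∈ Set.Icc (0:ℝ) 1 := by
    intro a ha
    obtain ⟨⟨h1, h2⟩, _⟩ := hφ a ha
    exact ⟨le_trans ha.1 h1, h2⟩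
  -- left inverse
  have hli : ∀ a ∈ Set.Icc (0:ℝ) 1, paperPsi p (φ a) = a := by
    intro a ha
    exact psi_eq hp' (hmem a ha) (hφ a ha).2
  have hpsiM := psi_strictMonoOn hp'
  -- strict monotonicity of φ
  have hφmono : StrictMonoOn φ (Set.Icc (0:ℝ) 1) := by
    intro a ha b hb hab
    by_contra h
    push_neg at h
    have : b ≤ a := by
      have := hpsiM.monotoneOn (hmem b hb) (hmem a ha) h
      rwa [hli a ha, hli b hb] at this
    linarith
  -- psi s ∈ [0,1]
  have hpsimem : ∀ s ∈ Set.Icc (0:ℝ) 1, paperPsi p s ∈ Set.Icc (0:ℝ) 1 := fun s hs =>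
    ⟨psi_nonneg hp' hs, le_trans (psi_le hp' hs) hs.2⟩
  -- right inverse
  have hri : ∀ s ∈ Set.Icc (0:ℝ) 1, φ (paperPsi p s) = s := by
    intro s hs
    have hm := hpsimem s hs
    have h1 := hli (paperPsi p s) hm
    exact hpsiM.injOn (hmem _ hm) hs h1
  -- φ 0 = 0, φ 1 = 1
  have hφ1 : φ 1 = 1 := le_antisymm (hφ 1 (by norm_num)).1.2 (hφ 1 (by norm_num)).1.1
  have hφ0 : φ 0 = 0 := by
    have h := (hφ 0 (by norm_num)).2
    have hm := hmem 0 (by norm_num)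
    unfold paperPhi at h
    have h1 : (1:ℝ) ≤ (2 - φ 0) ^ 2 := by nlinarith [hm.2]
    have hpos : 0 < p * (1 - p) * (2 - φ 0) ^ 2 := by nlinarith
    have h2 : φ 0 ≤ 0 := by nlinarith [hm.1]
    exact le_antisymm h2 hm.1
  -- φ a ∈ (0,1) for a ∈ (0,1)
  have hφoo : ∀ a ∈ Set.Ioo (0:ℝ) 1, φ a ∈ Set.Ioo (0:ℝ) 1 := by
    intro a ha
    constructor
    · have := hφmono (by norm_num) ⟨ha.1.le, ha.2.le⟩ ha.1
      rwa [hφ0] at this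
    · have := hφmono ⟨ha.1.le, ha.2.le⟩ (by norm_num) ha.2
      rwa [hφ1] at this
  -- continuity of φ on (0,1)
  have hcont : ∀ a ∈ Set.Ioo (0:ℝ) 1, ContinuousAt φ a := by
    intro a ha
    apply hφmono.continuousAt_of_image_mem_nhds (Icc_mem_nhds ha.1 ha.2)
    apply Filter.mem_of_superset (Icc_mem_nhds (hφoo a ha).1 (hφoo a ha).2)
    intro s hs
    exact ⟨paperPsi p s, hpsimem s hs, hri s hs⟩
  -- differentiability
  have hdiff : DifferentiableOn ℝ φ (Set.Ioo (0:ℝ) 1) := by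
    intro a ha
    obtain ⟨hs1, hs2⟩ := hφoo a ha
    have hD : 0 < p * (1 - p) * (2 - φ a) ^ 2 + (1 - φ a) :=
      den_pos hp' ⟨hs1.le, hs2.le⟩
    have hN : HasDerivAt (fun s : ℝ => p * (1 - p) * (2 - s) ^ 2 * s)
        ((p * (1 - p) * (2 * (2 - φ a) ^ 1 * (-1))) * (φ a) + p * (1 - p) * (2 - φ a) ^ 2 * 1)
        (φ a) :=
      ((((hasDerivAt_id (φ a)).const_sub 2).pow 2).const_mul (p * (1 - p))).mul
        (hasDerivAt_id (φ a))
    have hG : HasDerivAt (fun s : ℝ => p * (1 - p) * (2 - s) ^ 2 + (1 - s))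
        (p * (1 - p) * (2 * (2 - φ a) ^ 1 * (-1)) + (-1)) (φ a) :=
      ((((hasDerivAt_id (φ a)).const_sub 2).pow 2).const_mul (p * (1 - p))).add
        ((hasDerivAt_id (φ a)).const_sub 1)
    have hpsi : HasDerivAt (paperPsi p)
        (p * (1 - p) * (p * (1 - p) * (2 - φ a) ^ 4 + (2 - φ a) * (2 * (φ a) ^ 2 - 3 * (φ a) + 2)) /
          (p * (1 - p) * (2 - φ a) ^ 2 + (1 - φ a)) ^ 2) (φ a) := by
      have := hN.div hG hD.ne'
      convert this using 1
      · rfl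
      · rfl
      · rfl
      · ring
    have hnum : 0 < p * (1 - p) *
        (p * (1 - p) * (2 - φ a) ^ 4 + (2 - φ a) * (2 * (φ a) ^ 2 - 3 * (φ a) + 2)) := by
      have h2 : 0 < 2 * (φ a) ^ 2 - 3 * (φ a) + 2 := by nlinarith [sq_nonneg (2 * φ a - 3/2)]
      have h3 : (0:ℝ) < 2 - φ a := by linarith
      have h4 : 0 < p * (1 - p) * (2 - φ a) ^ 4 := mul_pos hc (pow_pos h3 4)
      nlinarith [mul_pos h3 h2]
    have hderiv : HasDerivAt φ
        (p * (1 - p) * (p * (1 - p) * (2 - φ a) ^ 4 + (2 - φ a) * (2 * (φ a) ^ 2 - 3 * (φ a) + 2)) /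
          (p * (1 - p) * (2 - φ a) ^ 2 + (1 - φ a)) ^ 2)⁻¹ a :=
      HasDerivAt.of_local_left_inverse (hcont a ha) hpsi
        (ne_of_gt (div_pos hnum (pow_pos hD 2)))
        (by
          filter_upwards [Icc_mem_nhds ha.1 ha.2] with y hy
          exact hli y hy)
    exact hderiv.differentiableAt.differentiableWithinAt
  refine ⟨hφmono, hdiff, paperPsi p, hli, fun s hs => ⟨hri s hs, hpsimem s hs⟩, hpsiM, ?_, ?_, ?_⟩
  · simp [paperPsi]
  · have h1 : paperPsi p 1 = p * (1 - p) / (p * (1 - p)) := by unfold paperPsi; norm_num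
    rw [h1, div_self hc.ne']
  · intro s hs
    have hD := den_pos hp' ⟨hs.1.le, hs.2.le⟩
    constructor
    · apply div_pos _ hD
      have h1 : (0:ℝ) < 2 - s := by linarith [hs.2]
      exact mul_pos (mul_pos hc (pow_pos h1 2)) hs.1
    · unfold paperPsi
      rw [div_lt_iff₀ hD]
      nlinarith [mul_pos hs.1 (by linarith [hs.2] : (0:ℝ) < 1 - s)]
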